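/- For the ternary reflected Gray code and any even digit value k in {0,2} and any index i with 0 <= i < d: restricting the sequence RGC^d to those elements whose i-th digit equals k, and deleting the i-th digit from each, yields exactly the sequence RGC^{d-1} in order. -/

import Mathlib

/-- Auxiliary digit-scanning transformation: process the digits from most to least
significant, keeping track in `flip` of whether the remaining digits should currently
be complemented (`x ↦ b - 1 - x`); whenever the (possibly complemented) current digit
is odd, all following digits get complemented. -/
def rgcScanAux (b : ℕ) (flip : Bool) : List ℕ → List ℕ
  | [] => []
  | x :: xs =>
    let y := if flip then b - 1 - x else x
    y :: rgcScanAux b (if y % 2 = 1 then !flip else flip) xs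

/-- `rgc b w` is the base-`b` reflected Gray code word of the number with digit string `w`
(most significant digit first): it is obtained from `w` by scanning the digits from most
to least significant and, whenever an odd digit is encountered, complementing
(`x ↦ b - 1 - x`) every subsequent digit. -/
def rgc (b : ℕ) (w : List ℕ) : List ℕ := rgcScanAux b false w

/-- The `d`-digit base-`b` representation of `n` (most significant digit first). -/
def digitsBE (b : ℕ) : ℕ → ℕ → List ℕ
  | 0, _ => []
  | d + 1, n => digitsBE b d (n / b) ++ [n % b]

/-- The base-`b` reflected Gray code as a sequence: the `r`-th element is the Gray code
word of the `d`-digit base-`b` representation of `r`, for `r = 0, ..., b^d - 1`. -/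
def rgcSeq (b d : ℕ) : List (List ℕ) :=
  (List.range (b ^ d)).map (fun r => rgc b (digitsBE b d r))

lemma digitsBE_succ (b d n : ℕ) :
    digitsBE b (d + 1) n = n / b ^ d % b :: digitsBE b d (n % b ^ d) := by
  induction d generalizing n with
  | zero => simp [digitsBE]
  | succ d ih =>
    show digitsBE b (d+1) (n / b) ++ [n % b] = _
    rw [ih (n / b)]
    show _ = _ :: (digitsBE b d ((n % b ^ (d+1)) / b) ++ [n % b ^ (d+1) % b])
    have h1 : b ^ (d + 1) = b * b ^ d := by ring
    rw [Nat.div_div_eq_div_mul, Nat.mod_mod_of_dvd n (dvd_pow_self b (Nat.succ_ne_zero d))]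
    rw [h1, Nat.mod_mul_right_div_self, mul_comm b (b ^ d), ← pow_succ]
    simp

lemma rgcScanAux_cons (b : ℕ) (f : Bool) (x : ℕ) (xs : List ℕ) :
    rgcScanAux b f (x :: xs) = (if f then b - 1 - x else x) ::
      rgcScanAux b (if (if f then b - 1 - x else x) % 2 = 1 then !f else f) xs := rfl

lemma reflect : ∀ d m, m < 3 ^ d →
    rgcScanAux 3 true (digitsBE 3 d m) = rgcScanAux 3 false (digitsBE 3 d (3 ^ d - 1 - m)) := by
  intro d
  induction d with
  | zero => intro m hm; simp [digitsBE, rgcScanAux]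
  | succ d ih =>
    intro m hm
    set P := 3 ^ d with hPdef
    have hP : 0 < P := by rw [hPdef]; positivity
    have h3 : (3 : ℕ) ^ (d + 1) = 3 * P := by rw [hPdef]; ring
    have hm' : m < 3 * P := by omega
    set a := m / P with hadef
    set r := m % P with hrdef
    have hdm : P * a + r = m := Nat.div_add_mod m P
    have hr : r < P := Nat.mod_lt m hP
    clear_value P a r
    have ha : a < 3 := by
      rw [hadef]; exact Nat.div_lt_of_lt_mul (by omega)
    have key : 3 ^ (d + 1) - 1 - m = (P - 1 - r) + (2 - a) * P := by
      rw [h3]; interval_cases a <;> omega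
    have hdiv : (3 ^ (d + 1) - 1 - m) / P = 2 - a := by
      rw [key, Nat.add_mul_div_right _ _ hP, Nat.div_eq_of_lt (by omega : P - 1 - r < P),
        Nat.zero_add]
    have hmod : (3 ^ (d + 1) - 1 - m) % P = P - 1 - r := by
      rw [key, Nat.add_mul_mod_self_right]
      exact Nat.mod_eq_of_lt (by omega)
    rw [digitsBE_succ, digitsBE_succ, ← hPdef, ← hadef, ← hrdef, hdiv, hmod,
      Nat.mod_eq_of_lt ha, Nat.mod_eq_of_lt (by omega : 2 - a < 3)]
    rw [rgcScanAux_cons, rgcScanAux_cons]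
    have hy : 3 - 1 - a = 2 - a := by omega
    by_cases hpar : (2 - a) % 2 = 1
    · have h1 := ih (P - 1 - r) (by omega)
      have hrr : P - 1 - (P - 1 - r) = r := by omega
      rw [hrr] at h1
      simp [hy, hpar, h1]
    · simp [hy, hpar, ih r (by omega)]

lemma rgc_digits_block (d a m : ℕ) (ha : a < 3) (hm : m < 3 ^ d) :
    rgc 3 (digitsBE 3 (d + 1) (a * 3 ^ d + m)) =
      a :: rgcScanAux 3 (if a % 2 = 1 then true else false) (digitsBE 3 d m) := by
  have h1 : (a * 3 ^ d + m) / 3 ^ d = a := by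
    rw [Nat.mul_comm, Nat.mul_add_div (by positivity : 0 < 3 ^ d),
      Nat.div_eq_of_lt hm, Nat.add_zero]
  have h2 : (a * 3 ^ d + m) % 3 ^ d = m := by
    rw [Nat.mul_add_mod', Nat.mod_eq_of_lt hm]
  rw [rgc, digitsBE_succ, h1, h2, Nat.mod_eq_of_lt ha, rgcScanAux_cons]
  simp

lemma blocks (d : ℕ) : rgcSeq 3 (d + 1) =
    (rgcSeq 3 d).map (fun w => 0 :: w) ++ ((rgcSeq 3 d).reverse).map (fun w => 1 :: w)
      ++ (rgcSeq 3 d).map (fun w => 2 :: w) := by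
  have hpow : (3:ℕ) ^ (d + 1) = 3 ^ d + (3 ^ d + 3 ^ d) := by ring
  rw [rgcSeq, hpow, List.range_add, List.range_add, List.map_append, List.map_map,
    List.map_append, List.map_map, List.append_assoc]
  congr 1
  · rw [rgcSeq, List.map_map]
    apply List.map_congr_left
    intro r hr
    rw [List.mem_range] at hr
    have := rgc_digits_block d 0 r (by norm_num) hr
    simp only [Function.comp_apply]
    rw [show r = 0 * 3 ^ d + r by ring, this]
    simp [rgc]
  congr 1
  · rw [rgcSeq, ← List.map_reverse, List.map_map, List.range_eq_range',
      List.reverse_range', List.map_map, ← List.range_eq_range']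
    apply List.map_congr_left
    intro r hr
    rw [List.mem_range] at hr
    have := rgc_digits_block d 1 r (by norm_num) hr
    simp only [Function.comp_apply]
    rw [show (3:ℕ) ^ d + r = 1 * 3 ^ d + r by ring, this]
    rw [show (if (1:ℕ) % 2 = 1 then true else false) = true by norm_num]
    rw [reflect d r hr]
    simp [rgc]
  · rw [rgcSeq, List.map_map]
    apply List.map_congr_left
    intro r hr
    rw [List.mem_range] at hr
    have := rgc_digits_block d 2 r (by norm_num) hr
    simp only [Function.comp_apply]
    rw [show (3:ℕ) ^ d + (3 ^ d + r) = 2 * 3 ^ d + r by ring, this]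
    simp [rgc]

def reduce (i k : ℕ) (L : List (List ℕ)) : List (List ℕ) :=
  (L.filter (fun w => w.getD i 0 = k)).map (fun w => w.eraseIdx i)

lemma reduce_append (i k : ℕ) (L M : List (List ℕ)) :
    reduce i k (L ++ M) = reduce i k L ++ reduce i k M := by
  simp [reduce]

lemma reduce_reverse (i k : ℕ) (L : List (List ℕ)) :
    reduce i k L.reverse = (reduce i k L).reverse := by
  simp [reduce]

lemma reduce_zero_eq (k : ℕ) (L : List (List ℕ)) :
    reduce 0 k (L.map (fun w => k :: w)) = L := by
  induction L with
  | nil => rfl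
  | cons w L ih => simp [reduce, List.filter_cons] at ih ⊢; exact ih

lemma reduce_zero_ne (a k : ℕ) (h : a ≠ k) (L : List (List ℕ)) :
    reduce 0 k (L.map (fun w => a :: w)) = [] := by
  induction L with
  | nil => rfl
  | cons w L ih => simpa [reduce, List.filter_cons, h] using ih

lemma reduce_succ (i k a : ℕ) (L : List (List ℕ)) :
    reduce (i + 1) k (L.map (fun w => a :: w)) = (reduce i k L).map (fun w => a :: w) := by
  induction L with
  | nil => rfl
  | cons w L ih =>
    simp only [reduce, List.map_cons, List.filter_cons, List.getD_cons_succ] at ih ⊢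
    simp only [List.getD_eq_getElem?_getD] at ih
    by_cases h : w[i]?.getD 0 = k <;> simp [h, ih]

lemma main_red : ∀ i d k, (k = 0 ∨ k = 2) → i < d + 1 →
    reduce i k (rgcSeq 3 (d + 1)) = rgcSeq 3 d := by
  intro i
  induction i with
  | zero =>
    intro d k hk _
    rw [blocks, reduce_append, reduce_append]
    rcases hk with rfl | rfl
    · rw [reduce_zero_eq, reduce_zero_ne 1 0 (by norm_num), reduce_zero_ne 2 0 (by norm_num)]
      simp
    · rw [reduce_zero_eq, reduce_zero_ne 1 2 (by norm_num), reduce_zero_ne 0 2 (by norm_num)]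
      simp
  | succ i ih =>
    intro d k hk hi
    obtain ⟨d', rfl⟩ : ∃ d', d = d' + 1 := ⟨d - 1, by omega⟩
    rw [blocks, reduce_append, reduce_append, reduce_succ, reduce_succ, reduce_reverse,
      reduce_succ, ih d' k hk (by omega), ← blocks]

/-- For the ternary reflected Gray code, any even digit value `k ∈ {0,2}` and any
index `i < d`: restricting the sequence `RGC^d` to those elements whose `i`-th digit
equals `k`, and deleting the `i`-th digit from each, yields exactly the sequence
`RGC^(d-1)` in order. -/
theorem ternary_rgc_reduction (d i k : ℕ) (hd : 2 ≤ d) (hi : i < d) (hk : k = 0 ∨ k = 2) :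
    ((rgcSeq 3 d).filter (fun w => w.getD i 0 = k)).map (fun w => w.eraseIdx i)
      = rgcSeq 3 (d - 1) := by
  obtain ⟨d', rfl⟩ : ∃ d', d = d' + 1 := ⟨d - 1, by omega⟩
  simpa [reduce] using main_red i d' k hk (by omega)
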